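/- Let π : G → H be a continuous open surjective homomorphism of topological groups, where G is a simply sm-factorizable P-group and H is ω-narrow. Then H is ℝ-factorizable. -/

import Mathlib

open Topology TopologicalSpace Pointwise Function Set

def IsCozero {X : Type*} [TopologicalSpace X] (U : Set X) : Prop :=
  ∃ f : X → ℝ, Continuous f ∧ U = f ⁻¹' {x : ℝ | x ≠ 0}

/-- A topological group is simply sm-factorizable if every cozero set is saturated with
respect to some continuous surjective homomorphism onto a separable metrizable topological group. -/
def SimplySMFactorizable (G : Type*) [Group G] [TopologicalSpace G] : Prop :=
  ∀ U : Set G, IsCozero U →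
    ∃ (H : Type) (gH : Group H) (tH : TopologicalSpace H),
      letI := gH
      letI := tH
      IsTopologicalGroup H ∧ SeparableSpace H ∧ MetrizableSpace H ∧
        ∃ π : G →* H, Continuous π ∧ Surjective π ∧ ⇑π ⁻¹' (⇑π '' U) = U

/-- A (para)topological group is ω-narrow if each neighborhood of the identity translates
over a countable set to cover the group. -/
def OmegaNarrow (G : Type*) [Group G] [TopologicalSpace G] : Prop :=
  ∀ U ∈ 𝓝 (1 : G), ∃ A : Set G, A.Countable ∧ A * U = Set.univ ∧ U * A = Set.univ

/-- A topological group is ℝ-factorizable if every continuous real-valued function factors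
through a continuous surjective homomorphism onto a separable metrizable topological group. -/
def RFactorizable (G : Type*) [Group G] [TopologicalSpace G] : Prop :=
  ∀ f : G → ℝ, Continuous f →
    ∃ (K : Type) (gK : Group K) (tK : TopologicalSpace K),
      letI := gK
      letI := tK
      IsTopologicalGroup K ∧ SeparableSpace K ∧ MetrizableSpace K ∧
        ∃ p : G →* K, Continuous p ∧ Surjective p ∧ ∃ h : K → ℝ, Continuous h ∧ f = h ∘ p

lemma isCozero_preimage_open {X : Type*} [TopologicalSpace X] {g : X → ℝ}
    (hg : Continuous g) {O : Set ℝ} (hO : IsOpen O) : IsCozero (g ⁻¹' O) := by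
  by_cases hu : O = univ
  · exact ⟨fun _ => 1, continuous_const, by simp [hu]⟩
  · have hne : Oᶜ.Nonempty := nonempty_compl.mpr hu
    refine ⟨(fun r => Metric.infDist r Oᶜ) ∘ g, (Metric.continuous_infDist_pt _).comp hg, ?_⟩
    ext x
    simp only [mem_preimage, comp_apply, mem_setOf_eq]
    rw [← not_iff_not, not_not]
    constructor
    · intro hx
      exact Metric.infDist_zero_of_mem hx
    · intro hx
      by_contra hmem
      have := (hO.isClosed_compl.notMem_iff_infDist_pos hne).mp (by simpa using hmem)
      linarith

lemma isGδ_preimage {X Y : Type*} [TopologicalSpace X] [TopologicalSpace Y] {f : X → Y}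
    (hf : Continuous f) {s : Set Y} (hs : IsGδ s) : IsGδ (f ⁻¹' s) := by
  obtain ⟨T, hT, hTc, rfl⟩ := hs
  rw [preimage_sInter]
  exact IsGδ.biInter hTc fun t ht => ((hT t ht).preimage hf).isGδ

theorem statement13 {G H : Type*} [Group G] [TopologicalSpace G] [IsTopologicalGroup G]
    [Group H] [TopologicalSpace H] [IsTopologicalGroup H]
    (π : G →* H) (hc : Continuous π) (ho : IsOpenMap π) (hs : Surjective π)
    (hG : SimplySMFactorizable G) (hP : ∀ s : Set G, IsGδ s → IsOpen s)
    (hH : OmegaNarrow H) : RFactorizable H := by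
  intro f hf
  set g : G → ℝ := f ∘ π with hgdef
  have hgc : Continuous g := hf.comp hc
  obtain ⟨b, hbc, -, hb⟩ := exists_countable_basis ℝ
  haveI : Countable b := hbc.to_subtype
  have hcoz : ∀ B : b, IsCozero (g ⁻¹' (B : Set ℝ)) := fun B =>
    isCozero_preimage_open hgc (hb.isOpen B.2)
  choose M gM tM hTG hSep hMet φ hφc hφs hsat using fun B : b => hG _ (hcoz B)
  -- the kernel intersection
  let N' : Set G := ⋂ B : b, (φ B) ⁻¹' {(φ B) 1}
  have hN'gd : IsGδ N' := by
    refine IsGδ.iInter fun B => ?_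
    letI := gM B; letI := tM B
    letI : MetricSpace (M B) := @metrizableSpaceMetric _ _ (hMet B)
    exact isGδ_preimage (hφc B) (IsGδ.singleton _)
  have hN'open : IsOpen N' := hP _ hN'gd
  have hmemN' : ∀ {m : G}, m ∈ N' ↔ ∀ B : b, (φ B) m = (φ B) 1 := by
    intro m; simp [N', mem_iInter]
  have hone : (1 : G) ∈ N' := hmemN'.mpr fun B => rfl
  -- key: multiplying by an element of N' does not change g
  have hkey : ∀ x m, m ∈ N' → g (x * m) = g x := by
    intro x m hm
    by_contra hne
    letI := fun B : b => gM B; letI := fun B : b => tM B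
    have hsame : ∀ B : b, (φ B) (x * m) = (φ B) x := by
      intro B
      have h1 : (φ B) 1 = 1 := map_one (φ B)
      have := hmemN'.mp hm B
      rw [map_mul, this, h1, mul_one]
    obtain ⟨B, hBb, hxB, hsub⟩ :=
      hb.exists_subset_of_mem_open (show g x ∈ ({g (x*m)}ᶜ : Set ℝ) by simpa using (Ne.symm hne))
        (isOpen_compl_singleton)
    have hx' : x ∈ g ⁻¹' (B : Set ℝ) := hxB
    have : x * m ∈ g ⁻¹' B := by
      rw [← hsat ⟨B, hBb⟩]
      exact ⟨x, hx', (hsame ⟨B, hBb⟩).symm⟩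
    exact (hsub this) rfl
  -- N' is a normal subgroup
  letI := fun B : b => gM B; letI := fun B : b => tM B
  have hone' : ∀ B : b, (φ B) 1 = 1 := fun B => map_one (φ B)
  let Nsub : Subgroup G :=
    { carrier := N'
      one_mem' := hone
      mul_mem' := by
        intro a c ha hc
        rw [hmemN'] at *
        intro B
        rw [map_mul, ha B, hc B, hone' B, mul_one]
      inv_mem' := by
        intro a ha
        rw [hmemN'] at *
        intro B
        rw [map_inv, ha B, hone' B, inv_one] }
  have hNsubNormal : Nsub.Normal := by
    constructor
    intro n hn x
    rw [show (n ∈ Nsub) = (n ∈ N') from rfl, hmemN'] at hn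
    show x * n * x⁻¹ ∈ N'
    rw [hmemN']
    intro B
    simp [map_mul, map_inv, hn B, hone' B]
  let NH : Subgroup H := Nsub.map π
  haveI hNHnormal : NH.Normal := hNsubNormal.map π hs
  have hNHopen : IsOpen (NH : Set H) := by
    have : (NH : Set H) = π '' N' := by
      simp [NH, Subgroup.coe_map]; rfl
    rw [this]; exact ho _ hN'open
  -- f is constant on cosets of NH
  have hconst : ∀ x y : H, x⁻¹ * y ∈ NH → f x = f y := by
    intro x y hxy
    obtain ⟨m, hm, hπm⟩ := hxy
    obtain ⟨a, rfl⟩ := hs x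
    have hy : y = π (a * m) := by
      rw [map_mul, hπm, mul_inv_cancel_left]
    rw [hy]
    exact (hkey a m hm).symm
  -- countability of the quotient
  obtain ⟨A, hAc, hAN, -⟩ := hH (NH : Set H) (hNHopen.mem_nhds (one_mem NH))
  let K := H ⧸ NH
  haveI : Countable K := by
    rw [← Set.countable_univ_iff]
    refine (hAc.image (QuotientGroup.mk (s := NH))).mono ?_
    rintro k -
    obtain ⟨x, rfl⟩ := QuotientGroup.mk_surjective k
    have hx : x ∈ A * (NH : Set H) := hAN ▸ mem_univ x
    obtain ⟨a, ha, n, hn, rfl⟩ := hx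
    exact ⟨a, ha, (QuotientGroup.mk_mul_of_mem a hn).symm⟩
  letI tK : TopologicalSpace K := ⊥
  haveI : DiscreteTopology K := ⟨rfl⟩
  haveI : IsTopologicalGroup K :=
    { continuous_mul := continuous_of_discreteTopology
      continuous_inv := continuous_of_discreteTopology }
  let p : H →* K := QuotientGroup.mk' NH
  have hpcont : Continuous p := by
    rw [continuous_def]
    intro s _
    have hsat' : p ⁻¹' s = (p ⁻¹' s) * (NH : Set H) := by
      ext x
      constructor
      · intro hx; exact ⟨x, hx, 1, one_mem NH, mul_one x⟩
      · rintro ⟨y, hy, n, hn, rfl⟩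
        show p (y * n) ∈ s
        have hn1 : p n = 1 := (QuotientGroup.eq_one_iff n).mpr hn
        have : p (y * n) = p y := by rw [map_mul, hn1, mul_one]
        rwa [this]
    rw [hsat']
    exact IsOpen.mul_left hNHopen
  have hpsurj : Surjective p := QuotientGroup.mk'_surjective NH
  have hout : ∀ k : K, p k.out = k := fun k => Quotient.out_eq' k
  have hfx : ∀ x : H, f x = f (p x).out := by
    intro x
    refine hconst _ _ ?_
    have h1 : p (x⁻¹ * (p x).out) = 1 := by
      rw [map_mul, map_inv, hout, inv_mul_cancel]
    exact (QuotientGroup.eq_one_iff _).mp h1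
  -- shrink the quotient to a group in universe 0
  haveI : Small.{0} K := Countable.toSmall K
  let K₀ : Type := Shrink.{0} K
  let e : K₀ ≃* K := Shrink.mulEquiv
  letI tK₀ : TopologicalSpace K₀ := ⊥
  haveI : DiscreteTopology K₀ := ⟨rfl⟩
  haveI : IsTopologicalGroup K₀ :=
    { continuous_mul := continuous_of_discreteTopology
      continuous_inv := continuous_of_discreteTopology }
  haveI : Countable K₀ := Countable.of_equiv K e.toEquiv.symm
  let p₀ : H →* K₀ := e.symm.toMonoidHom.comp p
  have hescont : Continuous (⇑e.symm : K → K₀) := continuous_of_discreteTopology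
  have hp₀cont : Continuous p₀ := hescont.comp hpcont
  have hp₀surj : Surjective p₀ := e.symm.surjective.comp hpsurj
  let h₀ : K₀ → ℝ := fun k => f ((e k).out)
  refine ⟨K₀, inferInstance, tK₀, inferInstance, inferInstance, inferInstance,
    p₀, hp₀cont, hp₀surj, h₀, continuous_of_discreteTopology, ?_⟩
  funext x
  show f x = f ((e (e.symm (p x))).out)
  rw [MulEquiv.apply_symm_apply]
  exact hfx x
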